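/- Fix an integer n ≥ 1, a real b > 0, an index i ∈ {1,…,n}, and nonnegative reals V_u(k) for u ∈ {1,…,n}, k ≥ 1. Define W : ℕ → ℝ by W(1) = 0 and W(k) = max(W(k−1) + Σ_{u=1}^{n} V_u(k−1) − n·b, 0) for k ≥ 2, and define A_i(k) = W(k) + Σ_{u=1}^{i} V_u(k) + n·b. Then for every k ≥ 1, A_i(k) = max over s ∈ {1,…,k} of [ Σ_{r=s}^{k−1} Σ_{u=1}^{n} V_u(r) + Σ_{u=1}^{i} V_u(k) − (k−s−1)·n·b ], where the empty sum (s = k) equals 0. -/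

import Mathlib

lemma sup'_add_const' {α : Type*} (s : Finset α) (H : s.Nonempty) (f : α → ℝ) (c : ℝ) :
    s.sup' H f + c = s.sup' H (fun x => f x + c) := by
  exact Finset.comp_sup'_eq_sup'_comp H (· + c) (fun x y => (max_add_add_right x y c).symm)

lemma W_formula (n : ℕ) (b : ℝ) (V : ℕ → ℕ → ℝ) (W : ℕ → ℝ)
    (hW1 : W 1 = 0)
    (hWrec : ∀ k, 2 ≤ k →
      W k = max (W (k - 1) + ∑ u ∈ Finset.Icc 1 n, V u (k - 1) - n * b) 0) :
    ∀ k, ∀ hk : 1 ≤ k,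
      W k = (Finset.Icc 1 k).sup' (Finset.nonempty_Icc.mpr hk)
        (fun s => ∑ r ∈ Finset.Ico s k, ∑ u ∈ Finset.Icc 1 n, V u r
          - ((k : ℝ) - s) * (n * b)) := by
  intro k hk
  induction k, hk using Nat.le_induction with
  | base =>
    simp [hW1]
  | succ m hm ih =>
    have hrec := hWrec (m + 1) (by omega)
    simp only [Nat.add_sub_cancel] at hrec
    have hins : insert (m + 1) (Finset.Icc 1 m) = Finset.Icc 1 (m + 1) :=
      Finset.insert_Icc_right_eq_Icc_add_one (by omega)
    rw [hrec, ih, add_sub_assoc, sup'_add_const']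
    have key : (Finset.Icc 1 (m+1)).sup' (Finset.nonempty_Icc.mpr (by omega))
        (fun s => ∑ r ∈ Finset.Ico s (m+1), ∑ u ∈ Finset.Icc 1 n, V u r
          - (((m+1) : ℝ) - s) * (n * b))
        = (fun s => ∑ r ∈ Finset.Ico s (m+1), ∑ u ∈ Finset.Icc 1 n, V u r
          - (((m+1) : ℝ) - s) * (n * b)) (m+1) ⊔ (Finset.Icc 1 m).sup' (Finset.nonempty_Icc.mpr hm)
        (fun s => ∑ r ∈ Finset.Ico s (m+1), ∑ u ∈ Finset.Icc 1 n, V u r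
          - (((m+1) : ℝ) - s) * (n * b)) := by
      rw [Finset.sup'_congr _ hins.symm (fun a _ => rfl), Finset.sup'_insert]
    push_cast at key ⊢
    rw [key, max_comm]
    congr 1
    · simp
    · apply Finset.sup'_congr _ rfl
      intro s hs
      simp only [Finset.mem_Icc] at hs
      rw [Finset.sum_Ico_succ_top hs.2]
      push_cast
      ring

theorem fcfs_peak_age_formula (n : ℕ) (hn : 1 ≤ n) (b : ℝ) (hb : 0 < b)
    (i : ℕ) (hi : i ∈ Finset.Icc 1 n)
    (V : ℕ → ℕ → ℝ) (hV : ∀ u k, 0 ≤ V u k)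
    (W A : ℕ → ℝ)
    (hW1 : W 1 = 0)
    (hWrec : ∀ k, 2 ≤ k →
      W k = max (W (k - 1) + ∑ u ∈ Finset.Icc 1 n, V u (k - 1) - n * b) 0)
    (hA : ∀ k, A k = W k + ∑ u ∈ Finset.Icc 1 i, V u k + n * b) :
    ∀ k, ∀ hk : 1 ≤ k,
      A k = (Finset.Icc 1 k).sup' (Finset.nonempty_Icc.mpr hk)
        (fun s => ∑ r ∈ Finset.Ico s k, ∑ u ∈ Finset.Icc 1 n, V u r
          + ∑ u ∈ Finset.Icc 1 i, V u k - ((k : ℝ) - s - 1) * (n * b)) := by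
  intro k hk
  rw [hA, W_formula n b V W hW1 hWrec k hk, add_assoc, sup'_add_const']
  apply Finset.sup'_congr _ rfl
  intro s hs
  ring
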